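/- Let R ⊆ S be integral domains, with S a commutative R-algebra, let n ≥ 1 be an integer, let a, b ∈ S be algebraically independent over R, and let c ∈ S satisfy c^n = a·b. Then the kernel of the R-algebra homomorphism R[U,V,Z] → S determined by U ↦ a, V ↦ b, Z ↦ c is exactly the principal ideal generated by UV − Z^n. -/

import Mathlib

section Aux
open Polynomial

/-- Valuation-counting lemma: in a domain with a prime `u` of finite multiplicity everywhere,
`u ∤ v`, `p^n = (u*v)^d * q^n` with `p q ≠ 0` forces `n ∣ d`. -/
lemma aux_dvd_of_pow_eq {B : Type*} [CommRing B] [IsDomain B] {u v : B} (hu : Prime u)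
    (huv : ¬ u ∣ v) (hfin : ∀ x : B, x ≠ 0 → FiniteMultiplicity u x)
    {n d : ℕ} (hn : 1 ≤ n) {p q : B} (hp : p ≠ 0) (hq : q ≠ 0)
    (h : p ^ n = (u * v) ^ d * q ^ n) : n ∣ d := by
  have hv0 : v ≠ 0 := fun hv => huv (hv ▸ dvd_zero u)
  have huv0 : u * v ≠ 0 := mul_ne_zero hu.ne_zero hv0
  have h1 : multiplicity u (p ^ n) = n * multiplicity u p :=
    FiniteMultiplicity.multiplicity_pow hu (hfin p hp)
  have hfin2 : FiniteMultiplicity u ((u * v) ^ d * q ^ n) := h ▸ (hfin p hp).pow hu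
  have h2 : multiplicity u ((u * v) ^ d * q ^ n)
      = d * multiplicity u (u * v) + n * multiplicity u q := by
    rw [multiplicity_mul hu hfin2, FiniteMultiplicity.multiplicity_pow hu (hfin _ huv0),
      FiniteMultiplicity.multiplicity_pow hu (hfin q hq)]
  have h3 : multiplicity u (u * v) = 1 := by
    rw [multiplicity_mul hu (hfin _ huv0), multiplicity_self, multiplicity_eq_zero.2 huv]
  rw [h, h2, h3, mul_one] at h1
  have hle : multiplicity u q ≤ multiplicity u p := by
    refine Nat.le_of_mul_le_mul_left ?_ (by omega : 0 < n)
    omega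
  obtain ⟨e, he⟩ := Nat.exists_eq_add_of_le hle
  refine ⟨e, ?_⟩
  rw [he, Nat.mul_add] at h1
  linarith


lemma aux_pow_coeff {F L : Type*} [Field F] [Field L] [Algebra F L]
    {n : ℕ} (hn : 1 ≤ n) {t : F} {c : L} (hc : c ^ n = algebraMap F L t) :
    ∃ e : F, e ^ n = t ^ (minpoly F c).natDegree := by
  have hn0 : n ≠ 0 := by omega
  have haev : Polynomial.aeval c (X ^ n - C t : F[X]) = 0 := by
    simp [hc]
  have hint : IsIntegral F c := ⟨X ^ n - C t, monic_X_pow_sub_C t hn0, haev⟩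
  set q := minpoly F c with hq
  have hdvd : q ∣ X ^ n - C t := minpoly.dvd F c haev
  set d := q.natDegree with hd
  have hsp : Splits (q.map (algebraMap F (AlgebraicClosure F))) := IsAlgClosed.splits _
  set qΩ : Polynomial (AlgebraicClosure F) := q.map (algebraMap F (AlgebraicClosure F)) with hqΩ
  have hmon : q.Monic := minpoly.monic hint
  have hmonΩ : qΩ.Monic := hmon.map _
  have hcard : qΩ.roots.card = d := (hsp.natDegree_eq_card_roots.symm.trans (natDegree_map _))
  have hroots : ∀ r ∈ qΩ.roots, r ^ n = algebraMap F (AlgebraicClosure F) t := by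
    intro r hr
    have hr0 : aeval r q = 0 := by
      have := (mem_roots hmonΩ.ne_zero).1 hr
      rw [← eval_map_algebraMap]
      exact this
    have : aeval r (X ^ n - C t : F[X]) = 0 := by
      obtain ⟨k, hk⟩ := hdvd
      rw [hk, map_mul, hr0, zero_mul]
    simpa [sub_eq_zero] using this
  have hprod : qΩ.roots.prod ^ n = algebraMap F (AlgebraicClosure F) t ^ d := by
    have : qΩ.roots.map (fun r => r ^ n) = qΩ.roots.map
        (fun _ => algebraMap F (AlgebraicClosure F) t) := Multiset.map_congr rfl hroots
    calc qΩ.roots.prod ^ n = (qΩ.roots.map (fun r => r ^ n)).prod := by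
            rw [Multiset.prod_map_pow]; simp
      _ = (qΩ.roots.map (fun _ => algebraMap F (AlgebraicClosure F) t)).prod := by rw [this]
      _ = algebraMap F (AlgebraicClosure F) t ^ d := by
            rw [Multiset.map_const', Multiset.prod_replicate, hcard]
  have hcoeff : qΩ.coeff 0 = (-1) ^ qΩ.natDegree * qΩ.roots.prod :=
    hsp.coeff_zero_eq_prod_roots_of_monic hmonΩ
  have hdeg : qΩ.natDegree = d := natDegree_map _
  refine ⟨(-1) ^ d * q.coeff 0, ?_⟩
  have hinj : Function.Injective (algebraMap F (AlgebraicClosure F)) :=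
    (algebraMap F (AlgebraicClosure F)).injective
  apply hinj
  have he : algebraMap F (AlgebraicClosure F) ((-1) ^ d * q.coeff 0) = qΩ.roots.prod := by
    rw [map_mul, map_pow, map_neg, map_one, ← coeff_map, hcoeff, hdeg, ← mul_assoc,
      ← mul_pow]
    simp
  rw [map_pow, he, hprod, map_pow]

set_option maxHeartbeats 1000000 in
lemma aux_ker_eval₂ {A S : Type*} [CommRing A] [IsDomain A] [CommRing S] [IsDomain S]
    (φ : A →+* S) (hφ : Function.Injective φ) {n : ℕ} (hn : 1 ≤ n) {w : A} (hw : w ≠ 0)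
    {c : S} (hc : c ^ n = φ w)
    (hW : ∀ (d : ℕ) (p q : A), p ≠ 0 → q ≠ 0 → p ^ n = w ^ d * q ^ n → n ∣ d) :
    RingHom.ker (eval₂RingHom φ c) = Ideal.span {X ^ n - C w} := by
  have hn0 : n ≠ 0 := by omega
  set g := eval₂RingHom φ c with hg
  have hgf : g (X ^ n - C w) = 0 := by
    simp [hg, hc]
  refine le_antisymm ?_ ?_
  swap
  · rw [Ideal.span_le]
    intro x hx
    rw [Set.mem_singleton_iff] at hx
    subst hx
    exact hgf
  intro p hp
  rw [RingHom.mem_ker] at hp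
  set f : A[X] := X ^ n - C w with hfdef
  have hf : f.Monic := monic_X_pow_sub_C w hn0
  have hfd : f.degree = n := degree_X_pow_sub_C (by omega) w
  set s := p %ₘ f with hsdef
  have hdiv : f * (p /ₘ f) + s = p := by rw [add_comm]; exact modByMonic_add_div p f
  have hgs : g s = 0 := by
    have : s = p - f * (p /ₘ f) := (eq_sub_of_add_eq' hdiv)
    rw [this, map_sub, map_mul, hp, hgf, zero_mul, sub_zero]
  suffices hs : s = 0 by
    rw [← hdiv, hs, add_zero]
    exact Ideal.mem_span_singleton.2 ⟨_, rfl⟩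
  by_contra hs
  -- pass to fraction fields
  let L := FractionRing S
  let F := FractionRing A
  let j : A →+* L := (algebraMap S L).comp φ
  have hj : Function.Injective j := (IsFractionRing.injective S L).comp hφ
  let h : F →+* L := IsFractionRing.lift hj
  letI : Algebra F L := h.toAlgebra
  have halg : algebraMap F L = h := rfl
  set c' : L := algebraMap S L c with hc'
  set t : F := algebraMap A F w with htdef
  have hcomm : h.comp (algebraMap A F) = j :=
    RingHom.ext fun x => IsFractionRing.lift_algebraMap (K := F) hj x
  have ht : c' ^ n = algebraMap F L t := by
    rw [halg, htdef, ← RingHom.comp_apply, hcomm]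
    show c' ^ n = algebraMap S L (φ w)
    rw [← hc, map_pow]
  have haev : Polynomial.aeval c' (X ^ n - C t : F[X]) = 0 := by simp [ht]
  have hci : IsIntegral F c' := ⟨X ^ n - C t, monic_X_pow_sub_C t hn0, haev⟩
  set d := (minpoly F c').natDegree with hddef
  have hd1 : 0 < d := minpoly.natDegree_pos hci
  have hdn : d ≤ n := by
    have h1 := Polynomial.natDegree_le_of_dvd (minpoly.dvd F c' haev)
      (monic_X_pow_sub_C t hn0).ne_zero
    rwa [natDegree_X_pow_sub_C] at h1
  obtain ⟨e, he⟩ := aux_pow_coeff hn ht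
  rw [← hddef] at he
  have hwF : t ≠ 0 := fun h0 => hw (IsFractionRing.injective A F (by rw [← htdef, h0, map_zero]))
  have he0 : e ≠ 0 := by
    intro h0
    rw [h0, zero_pow hn0] at he
    exact hwF (pow_eq_zero_iff (by omega : d ≠ 0) |>.1 he.symm)
  obtain ⟨p₀, q₀, hq₀, heq⟩ := IsFractionRing.div_surjective (A := A) e
  have hq0' : q₀ ≠ 0 := nonZeroDivisors.ne_zero hq₀
  have hq0F : algebraMap A F q₀ ≠ 0 := fun h0 =>
    hq0' (IsFractionRing.injective A F (by rw [h0, map_zero]))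
  have hp0 : p₀ ≠ 0 := by
    intro h0
    apply he0
    rw [← heq, h0, map_zero, zero_div]
  have key : algebraMap A F (p₀ ^ n) = algebraMap A F (w ^ d * q₀ ^ n) := by
    rw [map_pow, map_mul, map_pow, map_pow]
    have he' : (algebraMap A F p₀ / algebraMap A F q₀) ^ n = t ^ d := by rw [heq, he]
    rw [div_pow] at he'
    rw [div_eq_iff (pow_ne_zero _ hq0F)] at he'
    rw [he']
  have keyA : p₀ ^ n = w ^ d * q₀ ^ n := IsFractionRing.injective A F key
  have hnd : n ∣ d := hW d p₀ q₀ hp0 hq0' keyA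
  have hdeq : d = n := le_antisymm hdn (Nat.le_of_dvd hd1 hnd)
  -- contradiction with s ≠ 0 of degree < n
  have hs' : s.map (algebraMap A F) ≠ 0 := by
    rw [Ne, Polynomial.map_eq_zero_iff (IsFractionRing.injective A F)]
    exact hs
  have haevs : Polynomial.aeval c' (s.map (algebraMap A F)) = 0 := by
    rw [aeval_def, eval₂_map, halg, hcomm, hc']
    show eval₂ ((algebraMap S L).comp φ) (algebraMap S L c) s = 0
    rw [← hom_eval₂]
    have : eval₂ φ c s = g s := rfl
    rw [this, hgs, map_zero]
  have hlt := minpoly.degree_le_of_ne_zero F c' hs' haevs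
  have h1 : (s.map (algebraMap A F)).degree = s.degree :=
    degree_map_eq_of_injective (IsFractionRing.injective A F) s
  have h2 : s.degree < (n : WithBot ℕ) := hfd ▸ degree_modByMonic_lt p hf
  have h3 : (minpoly F c').degree = (n : WithBot ℕ) := by
    rw [degree_eq_natDegree (minpoly.ne_zero hci), ← hddef, hdeq]
  rw [h1, h3] at hlt
  exact absurd (hlt.trans_lt h2) (lt_irrefl _)

end Aux

open MvPolynomial

set_option maxHeartbeats 1000000 in
/-- Let `R ⊆ S` be integral domains (`S` a commutative `R`-algebra with injective structure
map), `n ≥ 1`, let `a, b ∈ S` be algebraically independent over `R`, and let `c ∈ S` satisfy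
`c^n = a·b`.  Then the kernel of the `R`-algebra homomorphism `R[U,V,Z] → S` determined by
`U ↦ a, V ↦ b, Z ↦ c` is exactly the principal ideal generated by `UV − Z^n`. -/
theorem ker_aeval_eq_span_UV_sub_Zn (R S : Type) [CommRing R] [IsDomain R]
    [CommRing S] [IsDomain S] [Algebra R S]
    (hinj : Function.Injective (algebraMap R S))
    (n : ℕ) (hn : 1 ≤ n) (a b c : S)
    (hab : AlgebraicIndependent R ![a, b]) (hc : c ^ n = a * b) :
    RingHom.ker (MvPolynomial.aeval (R := R) ![a, b, c]).toRingHom =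
      Ideal.span {(X 0 * X 1 - X 2 ^ n : MvPolynomial (Fin 3) R)} := by
  classical
  set w : MvPolynomial (Fin 2) R := X 0 * X 1 with hwdef
  have hw : w ≠ 0 := mul_ne_zero (X_ne_zero _) (X_ne_zero _)
  let φ : MvPolynomial (Fin 2) R →+* S := (aeval ![a, b]).toRingHom
  have hφ : Function.Injective φ := hab
  have hcw : c ^ n = φ w := by simp [φ, hwdef, hc]
  -- the `n ∣ d` valuation input
  have hW : ∀ (d : ℕ) (p q : MvPolynomial (Fin 2) R),
      p ≠ 0 → q ≠ 0 → p ^ n = w ^ d * q ^ n → n ∣ d := by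
    intro d p q hp hq hE
    set E := (finSuccEquiv R 1 : MvPolynomial (Fin 2) R ≃ₐ[R] Polynomial (MvPolynomial (Fin 1) R))
      with hEdef
    have hEw : E w = Polynomial.X * Polynomial.C (X 0) := by
      rw [hwdef, map_mul, finSuccEquiv_X_zero, show (1 : Fin 2) = Fin.succ 0 from rfl,
        finSuccEquiv_X_succ]
    have hEinj : Function.Injective E := E.injective
    have hE' : (E p) ^ n = (Polynomial.X * Polynomial.C (X 0)) ^ d * (E q) ^ n := by
      rw [← hEw, ← map_pow, ← map_pow, ← map_pow, ← map_mul, hE]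
    refine aux_dvd_of_pow_eq Polynomial.prime_X ?_ ?_ hn ?_ ?_ hE'
    · rw [Polynomial.X_dvd_iff, Polynomial.coeff_C_zero]
      exact X_ne_zero _
    · intro x hx
      simpa using Polynomial.finiteMultiplicity_X_sub_C (0 : MvPolynomial (Fin 1) R) hx
    · intro h0
      exact hp (hEinj (by rw [h0, map_zero]))
    · intro h0
      exact hq (hEinj (by rw [h0, map_zero]))
  have hker := aux_ker_eval₂ φ hφ hn hw hcw hW
  -- the change of variables
  let Ψ : MvPolynomial (Fin 3) R ≃ₐ[R] Polynomial (MvPolynomial (Fin 2) R) :=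
    (renameEquiv R (finRotate 3)).trans (finSuccEquiv R 2)
  have hΨ0 : Ψ (X 0) = Polynomial.C (X 0) := by
    show finSuccEquiv R 2 (rename (finRotate 3) (X 0)) = _
    rw [rename_X, finRotate_succ_apply, show ((0 : Fin 3) + 1) = Fin.succ 0 by decide,
      finSuccEquiv_X_succ]
  have hΨ1 : Ψ (X 1) = Polynomial.C (X 1) := by
    show finSuccEquiv R 2 (rename (finRotate 3) (X 1)) = _
    rw [rename_X, finRotate_succ_apply, show ((1 : Fin 3) + 1) = Fin.succ 1 by decide,
      finSuccEquiv_X_succ]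
  have hΨ2 : Ψ (X 2) = Polynomial.X := by
    show finSuccEquiv R 2 (rename (finRotate 3) (X 2)) = _
    rw [rename_X, finRotate_succ_apply, show ((2 : Fin 3) + 1) = (0 : Fin 3) by decide,
      finSuccEquiv_X_zero]
  have hcomp : (MvPolynomial.aeval (R := R) ![a, b, c]).toRingHom =
      (Polynomial.eval₂RingHom φ c).comp Ψ.toAlgHom.toRingHom := by
    apply MvPolynomial.ringHom_ext
    · intro r
      have hCr : (MvPolynomial.finSuccEquiv R 2) (C r : MvPolynomial (Fin 3) R)
          = Polynomial.C (C r) := by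
        simp [finSuccEquiv_apply]
      simp [Ψ, φ, hCr, aeval_C]
    · intro i
      fin_cases i
      · show aeval ![a, b, c] (X 0) = Polynomial.eval₂ φ c (Ψ (X 0))
        rw [hΨ0]
        simp [φ]
      · show aeval ![a, b, c] (X 1) = Polynomial.eval₂ φ c (Ψ (X 1))
        rw [hΨ1]
        simp [φ]
      · show aeval ![a, b, c] (X 2) = Polynomial.eval₂ φ c (Ψ (X 2))
        rw [hΨ2]
        simp [φ]
  rw [hcomp, ← RingHom.comap_ker, hker]
  ext x
  rw [Ideal.mem_comap, Ideal.mem_span_singleton, Ideal.mem_span_singleton]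
  have himg : Ψ (-(X 0 * X 1 - X 2 ^ n)) = Polynomial.X ^ n - Polynomial.C w := by
    simp only [map_neg, map_sub, map_mul, map_pow, hΨ0, hΨ1, hΨ2, hwdef, Polynomial.C_mul]
    ring
  show Polynomial.X ^ n - Polynomial.C w ∣ Ψ x ↔ _
  rw [← himg]
  constructor
  · intro hd
    have h2 := map_dvd Ψ.symm hd
    simp only [AlgEquiv.symm_apply_apply] at h2
    exact (neg_dvd).mp h2
  · intro hd
    exact map_dvd Ψ ((neg_dvd).mpr hd)
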